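/- For h(X) := max{‖X‖, |X₁|/ε} on ℂ² with 0 < ε < 1/√2 (where ‖·‖ is the Euclidean norm), the Wu norm satisfies 𝕎h(0,1) < √2 = 𝕎‖·‖(0,1). In particular, h ≥ ‖·‖ pointwise does not imply 𝕎h ≥ 𝕎‖·‖, so the Wu operation is not monotone. -/

import Mathlib

noncomputable section

open MeasureTheory Complex
open scoped ComplexConjugate

abbrev Cn (n : ℕ) := EuclideanSpace ℂ (Fin n)

instance {n : ℕ} : InnerProductSpace ℝ (Cn n) := InnerProductSpace.rclikeToReal ℂ _
instance {n : ℕ} : MeasurableSpace (Cn n) := borel _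
instance {n : ℕ} : BorelSpace (Cn n) := ⟨rfl⟩

/-- A ℂ-seminorm on ℂⁿ. -/
structure IsCSeminorm {n : ℕ} (h : Cn n → ℝ) : Prop where
  nonneg : ∀ X, 0 ≤ h X
  add_le : ∀ X Y, h (X + Y) ≤ h X + h Y
  smul : ∀ (t : ℂ) (X : Cn n), h (t • X) = ‖t‖ * h X

/-- A ℂ-norm on ℂⁿ. -/
def IsCNorm {n : ℕ} (h : Cn n → ℝ) : Prop :=
  IsCSeminorm h ∧ ∀ X, h X = 0 → X = 0

/-- A positive semidefinite Hermitian sesquilinear form on ℂⁿ,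
linear in the first variable (convention ⟨z,w⟩ = Σ zⱼ conj wⱼ). -/
structure HermForm (n : ℕ) where
  s : Cn n → Cn n → ℂ
  add_left : ∀ X Y Z, s (X + Y) Z = s X Z + s Y Z
  smul_left : ∀ (t : ℂ) (X Y : Cn n), s (t • X) Y = t * s X Y
  conj_symm : ∀ X Y, s Y X = conj (s X Y)
  nonneg : ∀ X, 0 ≤ (s X X).re

/-- Positive definiteness. -/
def HermForm.PosDef {n : ℕ} (s : HermForm n) : Prop := ∀ X, X ≠ 0 → 0 < (s.s X X).re

/-- q_s(X) = √ s(X,X). -/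
def HermForm.q {n : ℕ} (s : HermForm n) (X : Cn n) : ℝ := Real.sqrt (s.s X X).re

/-- The open unit ball E(s). -/
def HermForm.ball {n : ℕ} (s : HermForm n) : Set (Cn n) := {X | (s.s X X).re < 1}

/-- `s` is a minimal-volume positive definite Hermitian product with q_s ≤ h,
i.e. `s = s^h`. -/
def IsMinimalProd {n : ℕ} (h : Cn n → ℝ) (s : HermForm n) : Prop :=
  s.PosDef ∧ (∀ X, s.q X ≤ h X) ∧
    ∀ s' : HermForm n, s'.PosDef → (∀ X, s'.q X ≤ h X) →
      volume s.ball ≤ volume s'.ball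

namespace WuAux

def E2 : Cn 2 ≃ₗ[ℝ] ℂ × ℂ :=
  ((WithLp.linearEquiv 2 ℂ (Fin 2 → ℂ)).restrictScalars ℝ).trans
    ((LinearEquiv.piFinTwo ℂ (fun _ => ℂ)).restrictScalars ℝ)

lemma E2_apply (X : Cn 2) : E2 X = (X 0, X 1) := rfl

lemma E2_symm_apply_zero (z w : ℂ) : (E2.symm (z, w)) 0 = z := rfl
lemma E2_symm_apply_one (z w : ℂ) : (E2.symm (z, w)) 1 = w := rfl

def T' (u v : ℝ) (t : ℂ) : ℂ × ℂ →ₗ[ℝ] ℂ × ℂ :=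
  ((u • LinearMap.fst ℝ ℂ ℂ) + (LinearMap.mulLeft ℝ t).comp (LinearMap.snd ℝ ℂ ℂ)).prod
    (v • LinearMap.snd ℝ ℂ ℂ)

lemma T'_apply (u v : ℝ) (t : ℂ) (p : ℂ × ℂ) :
    T' u v t p = (u • p.1 + t * p.2, v • p.2) := rfl

lemma det_T' (u v : ℝ) (t : ℂ) : LinearMap.det (T' u v t) = (u * v) ^ 2 := by
  classical
  rw [← LinearMap.det_toMatrix (Complex.basisOneI.prod Complex.basisOneI)]
  have : (LinearMap.toMatrix (Complex.basisOneI.prod Complex.basisOneI)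
      (Complex.basisOneI.prod Complex.basisOneI)) (T' u v t)
      = Matrix.fromBlocks (u • 1)
          (Matrix.of fun i j => (Complex.basisOneI.repr (t * Complex.basisOneI j)) i)
          0 (v • 1) := by
    ext i j
    rcases i with i | i <;> rcases j with j | j <;> fin_cases i <;> fin_cases j <;>
      simp [LinearMap.toMatrix_apply, T', Module.Basis.prod_apply, Matrix.fromBlocks,
        Finsupp.single_apply, Matrix.one_apply, eq_comm, Matrix.smul_apply,
        Complex.coe_basisOneI_repr, Complex.coe_basisOneI]
  rw [this, Matrix.det_fromBlocks_zero₂₁, Matrix.det_smul, Matrix.det_smul]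
  simp; ring

end WuAux

namespace WuAux

lemma norm_sq_coords (Y : Cn 2) : ‖Y‖ ^ 2 = normSq (Y 0) + normSq (Y 1) := by
  rw [EuclideanSpace.norm_eq, Real.sq_sqrt (by positivity)]
  simp [Fin.sum_univ_two, Complex.sq_norm]

lemma volume_ellipsoid (a d D : ℝ) (b : ℂ) (ha : 0 < a) (hD : 0 < D)
    (hcompat : a * d - normSq b = D) :
    volume {X : Cn 2 | a * normSq (X 0) + d * normSq (X 1)
        + 2 * (b * (X 0 * conj (X 1))).re < 1}
      = ENNReal.ofReal D⁻¹ * volume (Metric.ball (0 : Cn 2) 1) := by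
  set u : ℝ := Real.sqrt a with hu
  set v : ℝ := Real.sqrt (D / a) with hv
  have hu0 : 0 < u := Real.sqrt_pos.2 ha
  have hv0 : 0 < v := Real.sqrt_pos.2 (by positivity)
  have hu2 : u ^ 2 = a := Real.sq_sqrt ha.le
  have hv2 : v ^ 2 = D / a := Real.sq_sqrt (by positivity)
  set t : ℂ := conj b / (u : ℂ) with ht
  set f : Cn 2 →ₗ[ℝ] Cn 2 := (E2.symm : ℂ × ℂ →ₗ[ℝ] Cn 2) ∘ₗ (T' u v t) ∘ₗ (E2 : Cn 2 →ₗ[ℝ] ℂ × ℂ) with hf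
  have hdet : LinearMap.det f = D := by
    have : f = (E2.symm : ℂ × ℂ →ₗ[ℝ] Cn 2) ∘ₗ (T' u v t) ∘ₗ ((E2.symm).symm : Cn 2 →ₗ[ℝ] ℂ × ℂ) := rfl
    rw [this, LinearMap.det_conj (T' u v t) E2.symm, det_T']
    have : (u * v) ^ 2 = a * (D / a) := by rw [mul_pow, hu2, hv2]
    rw [this]; field_simp
  -- coordinates of f X
  have hfX0 : ∀ X : Cn 2, (f X) 0 = (u : ℂ) * X 0 + t * X 1 := by
    intro X
    show (E2.symm (T' u v t (E2 X))) 0 = _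
    rw [E2_apply, T'_apply, E2_symm_apply_zero]
    simp [Complex.real_smul]
  have hfX1 : ∀ X : Cn 2, (f X) 1 = (v : ℂ) * X 1 := by
    intro X
    show (E2.symm (T' u v t (E2 X))) 1 = _
    rw [E2_apply, T'_apply, E2_symm_apply_one]
    simp [Complex.real_smul]
  have hnorm : ∀ X : Cn 2, ‖f X‖ ^ 2
      = a * normSq (X 0) + d * normSq (X 1) + 2 * (b * (X 0 * conj (X 1))).re := by
    intro X
    rw [norm_sq_coords, hfX0, hfX1]
    have hu0' : (u : ℂ) ≠ 0 := by exact_mod_cast hu0.ne'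
    have hcross : ((u : ℂ) * X 0) * conj (t * X 1) = b * (X 0 * conj (X 1)) := by
      rw [ht]
      rw [map_mul, map_div₀, Complex.conj_conj, Complex.conj_ofReal]
      field_simp
    rw [Complex.normSq_add, Complex.normSq_mul, Complex.normSq_mul, Complex.normSq_mul]
    rw [hcross]
    have h1 : normSq (u : ℂ) = a := by rw [Complex.normSq_ofReal, ← hu2]; ring
    have h2 : normSq (v : ℂ) = D / a := by rw [Complex.normSq_ofReal, ← hv2]; ring
    have h3 : normSq t = normSq b / a := by
      rw [ht, Complex.normSq_div, Complex.normSq_conj, h1]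
    rw [h1, h2, h3]
    field_simp
    rw [← hcompat]
    ring
  have hset : {X : Cn 2 | a * normSq (X 0) + d * normSq (X 1)
      + 2 * (b * (X 0 * conj (X 1))).re < 1} = f ⁻¹' (Metric.ball 0 1) := by
    ext X
    simp only [Set.mem_setOf_eq, Set.mem_preimage, Metric.mem_ball, dist_zero_right]
    constructor
    · intro hlt
      nlinarith [norm_nonneg (f X), hnorm X]
    · intro hlt
      nlinarith [norm_nonneg (f X), hnorm X]
  rw [hset, Measure.addHaar_preimage_linearMap volume (by rw [hdet]; exact hD.ne') _, hdet,
    abs_of_pos (by positivity)]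

end WuAux
namespace WuAux

def e0 : Cn 2 := EuclideanSpace.single 0 (1:ℂ)
def e1 : Cn 2 := EuclideanSpace.single 1 (1:ℂ)

lemma e0_apply_0 : e0 0 = 1 := by simp [e0, EuclideanSpace.single_apply]
lemma e0_apply_1 : e0 1 = 0 := by simp [e0, EuclideanSpace.single_apply]
lemma e1_apply_0 : e1 0 = 0 := by simp [e1, EuclideanSpace.single_apply]
lemma e1_apply_1 : e1 1 = 1 := by simp [e1, EuclideanSpace.single_apply]

lemma coords_zero (X : Cn 2) (h0 : X 0 = 0) (h1 : X 1 = 0) : X = 0 := by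
  ext i
  fin_cases i <;> simpa

lemma decomp (X : Cn 2) : X = X 0 • e0 + X 1 • e1 := by
  ext i
  fin_cases i <;>
    simp [e0, e1, EuclideanSpace.single_apply]

lemma add_right' (σ : HermForm 2) (X Y Z : Cn 2) : σ.s X (Y + Z) = σ.s X Y + σ.s X Z := by
  rw [σ.conj_symm, σ.add_left, map_add, ← σ.conj_symm, ← σ.conj_symm]

lemma smul_right' (σ : HermForm 2) (t : ℂ) (X Y : Cn 2) :
    σ.s X (t • Y) = conj t * σ.s X Y := by
  rw [σ.conj_symm, σ.smul_left, map_mul, ← σ.conj_symm]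

lemma herm_expand (σ : HermForm 2) (X : Cn 2) :
    (σ.s X X).re = (σ.s e0 e0).re * normSq (X 0) + (σ.s e1 e1).re * normSq (X 1)
      + 2 * ((σ.s e0 e1) * (X 0 * conj (X 1))).re := by
  conv_lhs => rw [decomp X]
  simp only [σ.add_left, add_right' σ, σ.smul_left, smul_right' σ, σ.conj_symm e1 e0]
  simp only [Complex.add_re, Complex.mul_re, Complex.conj_re, Complex.conj_im,
    Complex.normSq_apply, Complex.mul_im]
  ring

def diagForm (α β : ℝ) (hα : 0 ≤ α) (hβ : 0 ≤ β) : HermForm 2 where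
  s X Y := (α : ℂ) * (X 0 * conj (Y 0)) + (β : ℂ) * (X 1 * conj (Y 1))
  add_left X Y Z := by
    dsimp only
    have h0 : (X + Y) 0 = X 0 + Y 0 := rfl
    have h1 : (X + Y) 1 = X 1 + Y 1 := rfl
    rw [h0, h1]; ring
  smul_left t X Y := by
    dsimp only
    have h0 : (t • X) 0 = t * X 0 := rfl
    have h1 : (t • X) 1 = t * X 1 := rfl
    rw [h0, h1]; ring
  conj_symm X Y := by
    simp only [map_add, map_mul, Complex.conj_conj, Complex.conj_ofReal]
    ring
  nonneg X := by
    simp only [Complex.mul_conj, Complex.add_re]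
    rw [← Complex.ofReal_mul, ← Complex.ofReal_mul, Complex.ofReal_re, Complex.ofReal_re]
    exact add_nonneg (mul_nonneg hα (Complex.normSq_nonneg _))
      (mul_nonneg hβ (Complex.normSq_nonneg _))

lemma diagForm_re (α β : ℝ) (hα : 0 ≤ α) (hβ : 0 ≤ β) (X : Cn 2) :
    ((diagForm α β hα hβ).s X X).re = α * normSq (X 0) + β * normSq (X 1) := by
  show ((α : ℂ) * (X 0 * conj (X 0)) + (β : ℂ) * (X 1 * conj (X 1))).re = _
  simp only [Complex.mul_conj, Complex.add_re]
  rw [← Complex.ofReal_mul, ← Complex.ofReal_mul, Complex.ofReal_re, Complex.ofReal_re]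

lemma diagForm_posDef (α β : ℝ) (hα : 0 < α) (hβ : 0 < β) :
    (diagForm α β hα.le hβ.le).PosDef := by
  intro X hX
  rw [diagForm_re]
  rcases (by
    by_contra hc
    push_neg at hc
    exact hX (coords_zero X (by simpa using hc.1) (by simpa using hc.2)) :
      X 0 ≠ 0 ∨ X 1 ≠ 0) with h | h
  · have : 0 < normSq (X 0) := Complex.normSq_pos.2 h
    nlinarith [Complex.normSq_nonneg (X 1)]
  · have : 0 < normSq (X 1) := Complex.normSq_pos.2 h
    nlinarith [Complex.normSq_nonneg (X 0)]

end WuAux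

set_option maxHeartbeats 1000000 in
open WuAux in
theorem stmt14 (ε : ℝ) (hε : 0 < ε) (hε2 : ε < 1 / Real.sqrt 2)
    (h : Cn 2 → ℝ) (hdef : ∀ X, h X = max ‖X‖ (‖X 0‖ / ε))
    (s : HermForm 2) (hs : IsMinimalProd h s) :
    (∀ X : Cn 2, ‖X‖ ≤ h X) ∧
    Real.sqrt 2 * s.q (EuclideanSpace.single 1 1) < Real.sqrt 2 ∧
    ¬ (∀ X : Cn 2, Real.sqrt 2 * ‖X‖ ≤ Real.sqrt 2 * s.q X) := by
  obtain ⟨hpos, hle, hmin⟩ := hs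
  have h2pos : (0:ℝ) < Real.sqrt 2 := Real.sqrt_pos.2 two_pos
  have hsq2 : Real.sqrt 2 ^ 2 = 2 := Real.sq_sqrt (by norm_num)
  have hε2' : ε ^ 2 < 1/2 := by
    rw [lt_div_iff₀ h2pos] at hε2
    nlinarith [hε.le]
  have hεsq : (0:ℝ) < ε ^ 2 := by positivity
  have h1e : (0:ℝ) < 1 - ε^2 := by nlinarith
  have h12 : (0:ℝ) < 1 - 2*ε^2 := by nlinarith
  -- abbreviations
  set a : ℝ := (s.s e0 e0).re with ha_def
  set d : ℝ := (s.s e1 e1).re with hd_def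
  set B : ℂ := s.s e0 e1 with hB_def
  have hd0 : 0 ≤ d := s.nonneg e1
  have key_le : ∀ X : Cn 2, (s.s X X).re ≤ (h X)^2 := by
    intro X
    have h1 := hle X
    simp only [HermForm.q] at h1
    have h2 : 0 ≤ h X := le_trans (Real.sqrt_nonneg _) h1
    nlinarith [Real.sq_sqrt (s.nonneg X), Real.sqrt_nonneg ((s.s X X).re)]
  have apos : 0 < a := by
    apply hpos
    intro hh
    have h0 : e0 0 = (0 : Cn 2) 0 := by rw [hh]
    rw [e0_apply_0] at h0
    simp at h0
  -- the key claim : d < 1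
  have hdlt : d < 1 := by
    by_contra hcon
    push_neg at hcon
    -- set up constants
    set c : ℝ := (1 - ε^2)/ε^2 with hc_def
    have hc1 : 1 < c := by
      rw [lt_div_iff₀ hεsq]
      nlinarith
    have h1c : 1 + c = 1/ε^2 := by rw [hc_def]; field_simp; ring
    set rc : ℝ := Real.sqrt c with hrc_def
    have hrc0 : 0 ≤ rc := Real.sqrt_nonneg c
    have hrc2 : rc^2 = c := Real.sq_sqrt (by linarith)
    -- test vector
    set w : ℂ := if B = 0 then ((rc : ℝ) : ℂ) else ((rc / ‖B‖ : ℝ) : ℂ) * B with hw_def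
    have hw1 : normSq w = c := by
      rw [hw_def]
      split_ifs with hB
      · rw [Complex.normSq_ofReal]; nlinarith
      · rw [Complex.normSq_mul, Complex.normSq_ofReal]
        have hab : ‖B‖ ≠ 0 := norm_ne_zero_iff.mpr hB
        have : normSq B = ‖B‖ ^ 2 := (Complex.sq_norm B).symm
        rw [this]
        field_simp
        nlinarith [hrc2]
    have hw2 : (B * conj w).re = rc * ‖B‖ := by
      rw [hw_def]
      split_ifs with hB
      · simp [hB]
      · rw [map_mul, Complex.conj_ofReal]
        have : B * (((rc / ‖B‖ : ℝ) : ℂ) * conj B)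
            = ((rc / ‖B‖ : ℝ) : ℂ) * ((normSq B : ℝ) : ℂ) := by
          rw [← Complex.mul_conj]; ring
        rw [this, ← Complex.ofReal_mul, Complex.ofReal_re]
        have hab : ‖B‖ ≠ 0 := norm_ne_zero_iff.mpr hB
        have hns : normSq B = ‖B‖ ^ 2 := (Complex.sq_norm B).symm
        rw [hns]
        field_simp
    set X : Cn 2 := e0 + w • e1 with hX_def
    have hX0 : X 0 = 1 := by
      show e0 0 + w * e1 0 = 1
      rw [e0_apply_0, e1_apply_0]; ring
    have hX1 : X 1 = w := by
      show e0 1 + w * e1 1 = w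
      rw [e0_apply_1, e1_apply_1]; ring
    -- evaluate h X
    have hnormX : ‖X‖ = Real.sqrt (1 + c) := by
      have := norm_sq_coords X
      rw [hX0, hX1, hw1] at this
      rw [← Real.sqrt_sq (norm_nonneg X), this]
      norm_num [Complex.normSq_one]
    have habsX0 : ‖X 0‖ = 1 := by rw [hX0]; simp
    have hhX : h X = 1/ε := by
      rw [hdef, hnormX, habsX0, h1c]
      rw [show (1:ℝ)/ε^2 = (1/ε)^2 by ring, Real.sqrt_sq (by positivity)]
      simp
    -- main inequality
    have hIneq : a + d * c + 2 * (rc * ‖B‖) ≤ 1 + c := by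
      have hk := key_le X
      rw [herm_expand, hX0, hX1, hw1, hhX] at hk
      rw [show (1:ℂ) * conj w = conj w by ring] at hk
      rw [hw2] at hk
      simp only [Complex.normSq_one] at hk
      rw [show ((1:ℝ)/ε)^2 = 1/ε^2 by ring, ← h1c] at hk
      linarith
    -- positivity of the determinant
    set β : ℝ := ‖B‖ with hβ_def
    have hβ0 : 0 ≤ β := norm_nonneg B
    have hβ2 : normSq B = β^2 := (Complex.sq_norm B).symm
    set detS : ℝ := a * d - normSq B with hdetS_def
    have hdetSpos : 0 < detS := by
      set Y : Cn 2 := (conj B) • e0 + (-(a:ℂ)) • e1 with hY_def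
      have hY0 : Y 0 = conj B := by
        show conj B * e0 0 + (-(a:ℂ)) * e1 0 = conj B
        rw [e0_apply_0, e1_apply_0]; ring
      have hY1 : Y 1 = -(a:ℂ) := by
        show conj B * e0 1 + (-(a:ℂ)) * e1 1 = -(a:ℂ)
        rw [e0_apply_1, e1_apply_1]; ring
      have hYne : Y ≠ 0 := by
        intro hh
        have : Y 1 = (0 : Cn 2) 1 := by rw [hh]
        rw [hY1] at this
        simp at this
        exact absurd this (by exact_mod_cast apos.ne')
      have hp := hpos Y hYne
      rw [herm_expand, hY0, hY1] at hp
      have hcross : (B * (conj B * conj (-(a:ℂ)))).re = -(a * normSq B) := by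
        rw [show B * (conj B * conj (-(a:ℂ))) = -((a:ℂ) * (B * conj B)) by
          rw [map_neg, Complex.conj_ofReal]; ring]
        rw [Complex.mul_conj, ← Complex.ofReal_mul]
        simp
      rw [hcross, Complex.normSq_conj, Complex.normSq_neg, Complex.normSq_ofReal] at hp
      nlinarith [hp]
    -- detS ≤ 1
    have hdetS1 : detS ≤ 1 := by
      have h3 := mul_le_mul_of_nonneg_right hIneq (by linarith : (0:ℝ) ≤ d)
      have h1 : (0:ℝ) ≤ (c*d - 1)*(d-1) :=
        mul_nonneg (by nlinarith) (by linarith)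
      have h2 : (0:ℝ) ≤ rc * β * d :=
        mul_nonneg (mul_nonneg hrc0 hβ0) (by linarith)
      rw [hdetS_def, hβ2]
      nlinarith [h3, h1, h2, sq_nonneg β]
    -- the competitor form
    have hα'pos : (0:ℝ) < 1/(2*ε^2) := by positivity
    have hβ'pos : (0:ℝ) < 1/(2*(1-ε^2)) := by positivity
    set s' : HermForm 2 := diagForm (1/(2*ε^2)) (1/(2*(1-ε^2))) hα'pos.le hβ'pos.le with hs'_def
    have hs'pos : s'.PosDef := diagForm_posDef _ _ hα'pos hβ'pos
    have hs'le : ∀ X, s'.q X ≤ h X := by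
      intro X
      simp only [HermForm.q, hs'_def, diagForm_re]
      set n0 : ℝ := normSq (X 0) with hn0_def
      set n1 : ℝ := normSq (X 1) with hn1_def
      have hn0 : 0 ≤ n0 := Complex.normSq_nonneg _
      have hn1 : 0 ≤ n1 := Complex.normSq_nonneg _
      rw [hdef]
      by_cases hcase : ε^2 * n1 ≤ (1-ε^2) * n0
      · refine le_trans ?_ (le_max_right _ _)
        have habs : ‖X 0‖ = Real.sqrt n0 := by rw [Complex.norm_def]
        have hdiv : Real.sqrt n0 / ε = Real.sqrt (n0 / ε^2) := by
          rw [show n0/ε^2 = n0 * (1/ε)^2 by ring, Real.sqrt_mul hn0,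
            Real.sqrt_sq (by positivity)]
          ring
        rw [habs, hdiv]
        apply Real.sqrt_le_sqrt
        have key : n0/(2*ε^2) + n1/(2*(1-ε^2)) ≤ n0 / ε^2 := by
          rw [div_add_div _ _ (by positivity) (by positivity),
            div_le_div_iff₀ (by positivity) hεsq]
          nlinarith [mul_le_mul_of_nonneg_left hcase (by positivity : (0:ℝ) ≤ 2*ε^2)]
        calc 1/(2*ε^2) * n0 + 1/(2*(1-ε^2)) * n1
            = n0/(2*ε^2) + n1/(2*(1-ε^2)) := by ring
          _ ≤ n0 / ε^2 := key
      · push_neg at hcase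
        refine le_trans ?_ (le_max_left _ _)
        have hX : ‖X‖ = Real.sqrt (n0 + n1) := by
          rw [← Real.sqrt_sq (norm_nonneg X), norm_sq_coords X]
        rw [hX]
        apply Real.sqrt_le_sqrt
        have key : n0/(2*ε^2) + n1/(2*(1-ε^2)) ≤ n0 + n1 := by
          rw [div_add_div _ _ (by positivity) (by positivity),
            div_le_iff₀ (by positivity)]
          nlinarith [mul_nonneg h12.le (sub_nonneg.2 hcase.le),
            mul_le_mul_of_nonneg_left hcase.le h12.le]
        calc 1/(2*ε^2) * n0 + 1/(2*(1-ε^2)) * n1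
            = n0/(2*ε^2) + n1/(2*(1-ε^2)) := by ring
          _ ≤ n0 + n1 := key
    -- volumes
    have hball_s : s.ball = {X : Cn 2 | a * normSq (X 0) + d * normSq (X 1)
        + 2 * (B * (X 0 * conj (X 1))).re < 1} := by
      ext X
      show (s.s X X).re < 1 ↔ _
      rw [herm_expand]
      exact Iff.rfl
    have hball_s' : s'.ball = {X : Cn 2 | 1/(2*ε^2) * normSq (X 0)
        + 1/(2*(1-ε^2)) * normSq (X 1) + 2 * ((0:ℂ) * (X 0 * conj (X 1))).re < 1} := by
      ext X
      show (s'.s X X).re < 1 ↔ _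
      rw [hs'_def, diagForm_re]
      simp
    have hvol_s : volume s.ball = ENNReal.ofReal detS⁻¹ * volume (Metric.ball (0 : Cn 2) 1) := by
      rw [hball_s]
      exact volume_ellipsoid a d detS B apos hdetSpos rfl
    have hprod : (0:ℝ) < 1/(2*ε^2) * (1/(2*(1-ε^2))) := by positivity
    have hvol_s' : volume s'.ball
        = ENNReal.ofReal (1/(2*ε^2) * (1/(2*(1-ε^2))))⁻¹ * volume (Metric.ball (0 : Cn 2) 1) := by
      rw [hball_s']
      exact volume_ellipsoid _ _ _ 0 hα'pos (by simpa using hprod) (by simp)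
    have hV0 : volume (Metric.ball (0 : Cn 2) 1) ≠ 0 :=
      (Metric.measure_ball_pos volume 0 one_pos).ne'
    have hVtop : volume (Metric.ball (0 : Cn 2) 1) ≠ ⊤ := measure_ball_lt_top.ne
    have hmin' := hmin s' hs'pos hs'le
    rw [hvol_s, hvol_s'] at hmin'
    rw [ENNReal.mul_le_mul_iff_left hV0 hVtop] at hmin'
    rw [ENNReal.ofReal_le_ofReal_iff (by positivity)] at hmin'
    -- derive contradiction
    have hαβ : 1 < 1/(2*ε^2) * (1/(2*(1-ε^2))) := by
      rw [div_mul_div_comm, one_mul, lt_div_iff₀ (by positivity)]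
      nlinarith [sq_nonneg (1 - 2*ε^2)]
    have h3 : detS * detS⁻¹ = 1 := mul_inv_cancel₀ hdetSpos.ne'
    have h4 : (1/(2*ε^2) * (1/(2*(1-ε^2)))) * (1/(2*ε^2) * (1/(2*(1-ε^2))))⁻¹ = 1 :=
      mul_inv_cancel₀ hprod.ne'
    have h5 := mul_le_mul_of_nonneg_left hmin' (mul_pos hdetSpos hprod).le
    have h6 : (detS * (1/(2*ε^2) * (1/(2*(1-ε^2))))) * detS⁻¹ = 1/(2*ε^2) * (1/(2*(1-ε^2))) := by
      rw [mul_comm detS, mul_assoc, h3, mul_one]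
    have h7 : (detS * (1/(2*ε^2) * (1/(2*(1-ε^2))))) * (1/(2*ε^2) * (1/(2*(1-ε^2))))⁻¹ = detS := by
      rw [mul_assoc, h4, mul_one]
    rw [h6, h7] at h5
    linarith
  -- conclude
  have hqlt : s.q (EuclideanSpace.single 1 1) < 1 := by
    have : s.q (EuclideanSpace.single 1 1) = Real.sqrt d := rfl
    rw [this]
    nlinarith [Real.sq_sqrt hd0, Real.sqrt_nonneg d]
  refine ⟨fun X => by rw [hdef]; exact le_max_left _ _, ?_, ?_⟩
  · calc Real.sqrt 2 * s.q (EuclideanSpace.single 1 1)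
        < Real.sqrt 2 * 1 := by
          exact mul_lt_mul_of_pos_left hqlt h2pos
      _ = Real.sqrt 2 := mul_one _
  · intro Hmono
    have hmo := Hmono (EuclideanSpace.single 1 1)
    have hn : ‖(EuclideanSpace.single 1 (1:ℂ) : Cn 2)‖ = 1 := by
      rw [EuclideanSpace.norm_single]
      simp
    rw [hn, mul_one] at hmo
    have : Real.sqrt 2 * s.q (EuclideanSpace.single 1 1) < Real.sqrt 2 := by
      calc Real.sqrt 2 * s.q (EuclideanSpace.single 1 1)
          < Real.sqrt 2 * 1 := mul_lt_mul_of_pos_left hqlt h2pos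
        _ = Real.sqrt 2 := mul_one _
    linarith
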